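/- Let A and B be unital C*-algebras, u a unitary element of B, P a central projection in B, and J : A → B a surjective Jordan *-isomorphism. Then the map T(a) = u·P·J(a) + u·(1_B − P)·J(a)* is a surjective real-linear isometry from A onto B. -/

import Mathlib

section JordanHelpers
variable {A B : Type*} [CStarAlgebra A] [CStarAlgebra B]

private lemma jordan_polar (J : A →ₗ[ℂ] B) (hJsq : ∀ a : A, J (a * a) = J a * J a) (a b : A) :
    J (a * b + b * a) = J a * J b + J b * J a := by
  have h1 : (a + b) * (a + b) = a * a + (a * b + b * a) + b * b := by noncomm_ring
  have h := hJsq (a + b)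
  rw [h1] at h
  simp only [map_add, hJsq] at h
  have h2 : (J a + J b) * (J a + J b)
      = J a * J a + (J a * J b + J b * J a) + J b * J b := by noncomm_ring
  rw [h2] at h
  rw [map_add]
  exact add_left_cancel (add_right_cancel h)

private lemma jordan_triple (J : A →ₗ[ℂ] B) (hJsq : ∀ a : A, J (a * a) = J a * J a) (a b : A) :
    J (a * b * a) = J a * J b * J a := by
  have key : a * (a * b + b * a) + (a * b + b * a) * a
      = (a * a * b + b * (a * a)) + (a * b * a + a * b * a) := by noncomm_ring
  have e1 := congrArg J key
  rw [jordan_polar J hJsq a (a * b + b * a), jordan_polar J hJsq a b, map_add,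
    jordan_polar J hJsq (a * a) b, map_add, hJsq a] at e1
  have e2 : J (a * b * a) + J (a * b * a) = J a * J b * J a + J a * J b * J a := by
    have h3 : J a * (J a * J b + J b * J a) + (J a * J b + J b * J a) * J a
        = (J a * J a * J b + J b * (J a * J a)) + (J a * J b * J a + J a * J b * J a) := by
      noncomm_ring
    rw [h3] at e1
    exact (add_left_cancel e1).symm
  have := congrArg (fun x => (2⁻¹ : ℂ) • x) e2
  simpa [← two_smul ℂ, smul_smul] using this

private lemma jordan_one (J : A →ₗ[ℂ] B) (hJsurj : Function.Surjective J)
    (hJsq : ∀ a : A, J (a * a) = J a * J a) : J 1 = 1 := by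
  obtain ⟨a, ha⟩ := hJsurj 1
  have h := jordan_polar J hJsq a 1
  rw [mul_one, one_mul, map_add, ha] at h
  have h2 : (1 : B) + 1 = J 1 + J 1 := by simpa using h
  have := congrArg (fun x => (2⁻¹ : ℂ) • x) h2
  simpa [← two_smul ℂ, smul_smul] using this.symm

private lemma jordan_isUnit (J : A →ₗ[ℂ] B) (hJsurj : Function.Surjective J)
    (hJsq : ∀ a : A, J (a * a) = J a * J a)
    (hJstar : ∀ a : A, J (star a) = star (J a))
    {a : A} (ha : IsSelfAdjoint a) (h : IsUnit a) :
    IsUnit (J a) := by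
  set b : A := ↑h.unit⁻¹ with hb
  have hab : a * b = 1 := by simp [hb, h.unit_spec]
  have hba : b * a = 1 := by simp [hb, h.unit_spec]
  have hbsa : star b = b := by
    have h1 : star b * a = 1 := by
      have : star b * star a = star (a * b) := (star_mul a b).symm
      rw [ha.star_eq] at this
      rw [this, hab, star_one]
    calc star b = star b * (a * b) := by rw [hab, mul_one]
      _ = (star b * a) * b := by rw [mul_assoc]
      _ = b := by rw [h1, one_mul]
  set w := J a with hw
  set s := J b with hs
  have hwsw : w * s * w = w := by
    have := jordan_triple J hJsq a b
    rw [show a * b * a = a by rw [hab, one_mul]] at this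
    exact this.symm
  have hpol : w * s + s * w = 1 + 1 := by
    have := jordan_polar J hJsq a b
    rw [hab, hba, map_add, jordan_one J hJsurj hJsq] at this
    exact this.symm
  set e := s * w with he_def
  have he : e * e = e := by
    calc e * e = s * (w * s * w) := by rw [he_def]; noncomm_ring
      _ = e := by rw [hwsw, he_def]
  have hestar : star e = w * s := by
    rw [he_def, star_mul, ← hJstar, ← hJstar, ha.star_eq, hbsa]
  set k := e - 1 with hk_def
  have hks : star k = -k := by
    have hws : w * s = 1 + 1 - e := by
      rw [eq_sub_iff_add_eq, add_comm (w*s) e, he_def]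
      rw [add_comm] at hpol
      exact hpol
    rw [hk_def, star_sub, star_one, hestar, hws]
    abel
  have hkk : k * k = -k := by
    have h1 : k * k = e * e - e - e + 1 := by rw [hk_def]; noncomm_ring
    rw [he] at h1
    rw [h1, hk_def]
    abel
  have hkzero : k = 0 := by
    have h1 : star (k * k) = k * k := by
      rw [star_mul, hks]
      noncomm_ring
    rw [hkk, star_neg, hks, neg_neg] at h1
    have h2 : k + k = 0 := by
      nth_rewrite 1 [h1]
      abel
    have h3 : (2 : ℂ) • k = 0 := by rw [two_smul]; exact h2
    simpa [two_ne_zero] using (smul_eq_zero.mp h3)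
  have he1 : e = 1 := by rwa [sub_eq_zero] at hkzero
  have hsw : s * w = 1 := he_def ▸ he1
  have hws : w * s = 1 := by
    have := hestar
    rw [he1, star_one] at this
    exact this.symm
  exact ⟨⟨w, s, hws, hsw⟩, rfl⟩

private lemma jordan_norm_sa (J : A →ₗ[ℂ] B) (hJbij : Function.Bijective J)
    (hJsq : ∀ a : A, J (a * a) = J a * J a)
    (hJstar : ∀ a : A, J (star a) = star (J a))
    {a : A} (ha : IsSelfAdjoint a) : ‖J a‖ = ‖a‖ := by
  set E := LinearEquiv.ofBijective J hJbij with hE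
  set J' : B →ₗ[ℂ] A := (E.symm : B →ₗ[ℂ] A) with hJ'
  have hJ'J : ∀ x : A, J' (J x) = x := fun x => E.symm_apply_apply x
  have hJJ' : ∀ y : B, J (J' y) = y := fun y => E.apply_symm_apply y
  have hJ'surj : Function.Surjective J' := fun x => ⟨J x, hJ'J x⟩
  have hJ'sq : ∀ y : B, J' (y * y) = J' y * J' y := by
    intro y; apply hJbij.1; rw [hJJ', hJsq, hJJ']
  have hJ'star : ∀ y : B, J' (star y) = star (J' y) := by
    intro y; apply hJbij.1; rw [hJJ', hJstar, hJJ']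
  have haJ : IsSelfAdjoint (J a) := by
    rw [IsSelfAdjoint, ← hJstar, ha.star_eq]
  have hspec : spectrum ℂ (J a) = spectrum ℂ a := by
    ext z
    by_cases hz : z.im = 0
    · have hcz : (starRingEnd ℂ) z = z := Complex.conj_eq_iff_im.mpr hz
      have hsaA : IsSelfAdjoint (algebraMap ℂ A z - a) := by
        rw [IsSelfAdjoint, star_sub, ha.star_eq, ← algebraMap_star_comm]
        simp [hcz]
      have hsaB : IsSelfAdjoint (algebraMap ℂ B z - J a) := by
        rw [IsSelfAdjoint, star_sub, haJ.star_eq, ← algebraMap_star_comm]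
        simp [hcz]
      have hJmap : J (algebraMap ℂ A z - a) = algebraMap ℂ B z - J a := by
        rw [map_sub, Algebra.algebraMap_eq_smul_one, Algebra.algebraMap_eq_smul_one,
          map_smul, jordan_one J hJbij.2 hJsq]
      have hJ'map : J' (algebraMap ℂ B z - J a) = algebraMap ℂ A z - a := by
        apply hJbij.1; rw [hJJ', hJmap]
      rw [spectrum.mem_iff, spectrum.mem_iff]
      constructor
      · intro hmem hunit
        exact hmem (hJmap ▸ jordan_isUnit J hJbij.2 hJsq hJstar hsaA hunit)
      · intro hmem hunit
        exact hmem (hJ'map ▸ jordan_isUnit J' hJ'surj hJ'sq hJ'star hsaB hunit)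
    · constructor <;> intro hmem
      · exact absurd (haJ.im_eq_zero_of_mem_spectrum hmem) hz
      · exact absurd (ha.im_eq_zero_of_mem_spectrum hmem) hz
  have h1 := ha.spectralRadius_eq_nnnorm
  have h2 := haJ.spectralRadius_eq_nnnorm
  have h3 : spectralRadius ℂ (J a) = spectralRadius ℂ a := by
    simp only [spectralRadius, hspec]
  rw [h1, h2] at h3
  have h4 := ENNReal.coe_inj.mp h3
  rw [← coe_nnnorm, ← coe_nnnorm, h4]

private lemma jordan_norm_le (J : A →ₗ[ℂ] B) (hJbij : Function.Bijective J)
    (hJsq : ∀ a : A, J (a * a) = J a * J a)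
    (hJstar : ∀ a : A, J (star a) = star (J a))
    (a : A) : ‖J a‖ ≤ 2 * ‖a‖ := by
  set h : A := (2⁻¹ : ℂ) • (a + star a) with hh
  set k : A := (-(Complex.I) / 2) • (a - star a) with hk
  have hhsa : IsSelfAdjoint h := by
    rw [IsSelfAdjoint, hh, star_smul, star_add, star_star]
    simp [add_comm]
  have hksa : IsSelfAdjoint k := by
    rw [IsSelfAdjoint, hk, star_smul, star_sub, star_star]
    have h1 : star (-(Complex.I) / 2) = Complex.I / 2 := by
      simp [Complex.ext_iff]
    rw [h1]
    module
  have hdec : a = h + Complex.I • k := by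
    rw [hh, hk]
    match_scalars <;> simp [Complex.ext_iff] <;> norm_num
  have hnh : ‖h‖ ≤ ‖a‖ := by
    rw [hh, norm_smul]
    calc ‖(2⁻¹ : ℂ)‖ * ‖a + star a‖ ≤ 2⁻¹ * (‖a‖ + ‖star a‖) := by
          rw [show ‖(2⁻¹ : ℂ)‖ = 2⁻¹ by simp]
          gcongr
          exact norm_add_le _ _
      _ = ‖a‖ := by rw [norm_star]; ring
  have hnk : ‖k‖ ≤ ‖a‖ := by
    rw [hk, norm_smul]
    calc ‖(-(Complex.I) / 2)‖ * ‖a - star a‖ ≤ 2⁻¹ * (‖a‖ + ‖star a‖) := by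
          rw [show ‖(-(Complex.I) / 2)‖ = 2⁻¹ by simp]
          gcongr
          exact norm_sub_le _ _
      _ = ‖a‖ := by rw [norm_star]; ring
  calc ‖J a‖ = ‖J h + Complex.I • J k‖ := by rw [hdec]; simp only [map_add, map_smul]
    _ ≤ ‖J h‖ + ‖Complex.I • J k‖ := norm_add_le _ _
    _ = ‖J h‖ + ‖J k‖ := by rw [norm_smul]; simp
    _ = ‖h‖ + ‖k‖ := by
        rw [jordan_norm_sa J hJbij hJsq hJstar hhsa, jordan_norm_sa J hJbij hJsq hJstar hksa]
    _ ≤ ‖a‖ + ‖a‖ := add_le_add hnh hnk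
    _ = 2 * ‖a‖ := by ring

private lemma norm_triple_self (x : B) : ‖x * star x * x‖ = ‖x‖ ^ 3 := by
  have hz : ∀ z : B, IsSelfAdjoint z → ‖z ^ 3‖ = ‖z‖ ^ 3 := by
    intro z hzsa
    by_cases h0 : ‖z‖ = 0
    · rw [norm_eq_zero] at h0
      simp [h0]
    · have h2 : ‖z * z‖ = ‖z‖ * ‖z‖ := by
        nth_rewrite 1 [← hzsa.star_eq]
        exact CStarRing.norm_star_mul_self
      have hsa2 : IsSelfAdjoint (z * z) := by
        rw [IsSelfAdjoint, star_mul, hzsa.star_eq]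
      have h4 : ‖z ^ 4‖ = ‖z‖ ^ 4 := by
        have e : z ^ 4 = (z * z) * (z * z) := by noncomm_ring
        rw [e]
        nth_rewrite 1 [← hsa2.star_eq]
        rw [CStarRing.norm_star_mul_self, h2]
        ring
      have hle : ‖z ^ 3‖ ≤ ‖z‖ ^ 3 := by
        calc ‖z ^ 3‖ = ‖z * z * z‖ := by rw [show z^3 = z*z*z by noncomm_ring]
          _ ≤ ‖z * z‖ * ‖z‖ := norm_mul_le _ _
          _ = ‖z‖ ^ 3 := by rw [h2]; ring
      have hge : ‖z‖ ^ 3 ≤ ‖z ^ 3‖ := by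
        have h5 : ‖z‖ ^ 4 ≤ ‖z ^ 3‖ * ‖z‖ := by
          calc ‖z‖ ^ 4 = ‖z ^ 4‖ := h4.symm
            _ = ‖z ^ 3 * z‖ := by rw [show z^4 = z^3*z by noncomm_ring]
            _ ≤ ‖z ^ 3‖ * ‖z‖ := norm_mul_le _ _
        have hpos : 0 < ‖z‖ := lt_of_le_of_ne (norm_nonneg z) (Ne.symm h0)
        exact (mul_le_mul_iff_of_pos_right hpos).mp (by
          calc ‖z‖^3 * ‖z‖ = ‖z‖^4 := by ring
            _ ≤ ‖z^3‖ * ‖z‖ := h5)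
      exact le_antisymm hle hge
  have sa : IsSelfAdjoint (star x * x) := IsSelfAdjoint.star_mul_self x
  have h1 : star (x * star x * x) * (x * star x * x) = (star x * x) ^ 3 := by
    simp only [star_mul, star_star]
    noncomm_ring
  have h6 : ‖x * star x * x‖ * ‖x * star x * x‖ = (‖x‖ ^ 3) * (‖x‖ ^ 3) := by
    rw [← CStarRing.norm_star_mul_self, h1, hz _ sa, CStarRing.norm_star_mul_self]
    ring
  exact mul_self_inj_of_nonneg (norm_nonneg _) (by positivity) |>.mp h6

private lemma triple_contraction {f : A → B} {C : ℝ}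
    (hC : ∀ x : A, ‖f x‖ ≤ C * ‖x‖)
    (htrip : ∀ x : A, f (x * star x * x) = f x * star (f x) * f x) (a : A) :
    ‖f a‖ ≤ ‖a‖ := by
  have key : ∀ (n : ℕ) (x : A), ‖f x‖ ^ 3 ^ n ≤ C * ‖x‖ ^ 3 ^ n := by
    intro n
    induction n with
    | zero => simpa using hC
    | succ n ih =>
      intro x
      have h1 := ih (x * star x * x)
      rw [htrip, norm_triple_self, norm_triple_self, ← pow_mul, ← pow_mul] at h1
      rwa [show 3 ^ (n+1) = 3 * 3 ^ n by rw [pow_succ]; ring]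
  by_cases h0 : ‖a‖ = 0
  · have h := hC a
    rw [h0, mul_zero] at h
    rw [h0]
    exact h
  · by_contra hcon
    push_neg at hcon
    have hapos : 0 < ‖a‖ := lt_of_le_of_ne (norm_nonneg a) (Ne.symm h0)
    set r := ‖f a‖ / ‖a‖ with hr
    have hr1 : 1 < r := (one_lt_div hapos).mpr hcon
    obtain ⟨n, hn⟩ := pow_unbounded_of_one_lt C hr1
    have h2 : r ^ n ≤ r ^ (3 ^ n) :=
      pow_le_pow_right₀ hr1.le (Nat.le_of_lt (Nat.lt_pow_self (n := n) (a := 3) (by norm_num)))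
    have h3 : r ^ (3 ^ n) ≤ C := by
      rw [hr, div_pow, div_le_iff₀ (by positivity)]
      exact key n a
    linarith

end JordanHelpers

theorem stmtN
    {A B : Type*}
    [NormedRing A] [StarRing A] [CStarRing A] [NormedAlgebra ℂ A]
    [CompleteSpace A] [StarModule ℂ A]
    [NormedRing B] [StarRing B] [CStarRing B] [NormedAlgebra ℂ B]
    [CompleteSpace B] [StarModule ℂ B]
    (u : B) (hu : u ∈ unitary B)
    (P : B) (hP : P * P = P) (hPsa : star P = P)
    (hPc : ∀ b : B, P * b = b * P)
    (J : A →ₗ[ℂ] B)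
    (hJbij : Function.Bijective J)
    (hJsq : ∀ a : A, J (a * a) = J a * J a)
    (hJstar : ∀ a : A, J (star a) = star (J a))
    (T : A → B)
    (hT : ∀ a : A, T a = u * (P * J a) + u * ((1 - P) * star (J a))) :
    Function.Surjective T ∧ Isometry T ∧
      (∀ x y : A, T (x + y) = T x + T y) ∧
      (∀ (r : ℝ) (x : A), T (r • x) = r • T x) := by
  letI : CStarAlgebra A :=
    { ‹NormedRing A›, ‹StarRing A›, ‹CompleteSpace A›, ‹CStarRing A›,
      ‹NormedAlgebra ℂ A›, ‹StarModule ℂ A› with }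
  letI : CStarAlgebra B :=
    { ‹NormedRing B›, ‹StarRing B›, ‹CompleteSpace B›, ‹CStarRing B›,
      ‹NormedAlgebra ℂ B›, ‹StarModule ℂ B› with }
  obtain ⟨hu1, hu2⟩ := Unitary.mem_iff.mp hu
  set Q : B := 1 - P with hQdef
  have hQc : ∀ b : B, Q * b = b * Q := by
    intro b
    rw [hQdef, sub_mul, mul_sub, one_mul, mul_one, hPc]
  have hQsa : star Q = Q := by rw [hQdef, star_sub, star_one, hPsa]
  have hQQ : Q * Q = Q := by
    have : Q * Q = 1 - P - P + P * P := by rw [hQdef]; noncomm_ring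
    rw [this, hP, hQdef]; abel
  have hPQ : P * Q = 0 := by
    have : P * Q = P - P * P := by rw [hQdef]; noncomm_ring
    rw [this, hP, sub_self]
  have hQP : Q * P = 0 := by
    have : Q * P = P - P * P := by rw [hQdef]; noncomm_ring
    rw [this, hP, sub_self]
  -- swap lemma for central elements
  have hswap : ∀ q : B, (∀ x : B, q * x = x * q) → ∀ p b c : B,
      (p * b) * (q * c) = (p * q) * (b * c) := by
    intro q hq p b c
    calc (p * b) * (q * c) = p * ((b * q) * c) := by noncomm_ring
      _ = p * ((q * b) * c) := by rw [← hq b]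
      _ = (p * q) * (b * c) := by noncomm_ring
  have hsplit : ∀ b c b' c' : B,
      (P * b + Q * c) * (P * b' + Q * c') = P * (b * b') + Q * (c * c') := by
    intro b c b' c'
    rw [add_mul, mul_add, mul_add, hswap P hPc P b b', hswap P hPc Q c b',
      hswap Q hQc P b c', hswap Q hQc Q c c', hP, hPQ, hQP, hQQ]
    simp
  have hstar_split : ∀ b c : B, star (P * b + Q * c) = P * star b + Q * star c := by
    intro b c
    rw [star_add, star_mul, star_mul, hPsa, hQsa, ← hPc, ← hQc]
  have habs1 : ∀ d e : B, P * (P * d + Q * e) = P * d := by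
    intro d e
    rw [mul_add, show P * (P * d) = (P * P) * d by noncomm_ring,
      show P * (Q * e) = (P * Q) * e by noncomm_ring, hP, hPQ, zero_mul, add_zero]
  have habs2 : ∀ d e : B, Q * (P * d + Q * e) = Q * e := by
    intro d e
    rw [mul_add, show Q * (P * d) = (Q * P) * d by noncomm_ring,
      show Q * (Q * e) = (Q * Q) * e by noncomm_ring, hQQ, hQP, zero_mul, zero_add]
  have hzzz : ∀ y : B,
      (P * y + Q * star y) * star (P * y + Q * star y) * (P * y + Q * star y)
        = P * (y * star y * y) + Q * (star y * y * star y) := by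
    intro y
    rw [hstar_split, star_star, hsplit, hsplit]
  -- inverse Jordan map
  set E := LinearEquiv.ofBijective J hJbij with hE
  set J' : B →ₗ[ℂ] A := (E.symm : B →ₗ[ℂ] A) with hJ'
  have hJ'J : ∀ x : A, J' (J x) = x := fun x => E.symm_apply_apply x
  have hJJ' : ∀ y : B, J (J' y) = y := fun y => E.apply_symm_apply y
  have hJ'bij : Function.Bijective J' := (E.symm : B ≃ₗ[ℂ] A).bijective
  have hJ'sq : ∀ y : B, J' (y * y) = J' y * J' y := by
    intro y; apply hJbij.1; rw [hJJ', hJsq, hJJ']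
  have hJ'star : ∀ y : B, J' (star y) = star (J' y) := by
    intro y; apply hJbij.1; rw [hJJ', hJstar, hJJ']
  have hJtrip : ∀ x y : A, J (x * y * x) = J x * J y * J x :=
    fun x y => jordan_triple J hJsq x y
  have hJ'trip : ∀ x y : B, J' (x * y * x) = J' x * J' y * J' x :=
    fun x y => jordan_triple J' hJ'sq x y
  have hzT : ∀ x : A, T x = u * (P * J x + Q * star (J x)) := by
    intro x
    rw [hT, mul_add, hQdef]
  -- the inverse map S
  set S : B → A := fun b => J' (P * (star u * b) + Q * star (star u * b)) with hSdef
  have hSb : ∀ b : B, S b = J' (P * (star u * b) + Q * star (star u * b)) := fun _ => rfl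
  -- T ∘ S = id
  have hTS : ∀ b : B, T (S b) = b := by
    intro b
    set c := star u * b with hc
    rw [hzT, hSb, hJJ', hstar_split, star_star, habs1, habs2]
    have hPQ1 : P * c + Q * c = c := by
      rw [hQdef, sub_mul, one_mul]; abel
    rw [hPQ1, hc, ← mul_assoc, hu2, one_mul]
  -- S ∘ T = id
  have hST : ∀ a : A, S (T a) = a := by
    intro a
    have hcTa : star u * T a = P * J a + Q * star (J a) := by
      rw [hzT, ← mul_assoc, hu1, one_mul]
    rw [hSb, hcTa, hstar_split, star_star, habs1, habs2]
    have hPQ1 : P * J a + Q * J a = J a := by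
      rw [hQdef, sub_mul, one_mul]; abel
    rw [hPQ1, hJ'J]
  -- triple identity for T
  have htripT : ∀ x : A, T (x * star x * x) = T x * star (T x) * T x := by
    intro x
    rw [hzT, hzT]
    have hJx : J (x * star x * x) = J x * star (J x) * J x := by
      rw [hJtrip x (star x), hJstar]
    rw [hJx]
    set y := J x with hy
    have hstar3 : star (y * star y * y) = star y * y * star y := by
      simp [star_mul, star_star, mul_assoc]
    set z := P * y + Q * star y with hz
    have hmid : (u * z) * star (u * z) * (u * z) = u * (z * star z * z) := by
      rw [star_mul]
      calc u * z * (star z * star u) * (u * z)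
          = u * (z * star z) * ((star u * u) * z) := by noncomm_ring
        _ = u * (z * star z * z) := by rw [hu1, one_mul]; noncomm_ring
    rw [hmid, hz, hzzz y, hstar3]
  -- triple identity for S
  have htripS : ∀ b : B, S (b * star b * b) = S b * star (S b) * S b := by
    intro b
    set c := star u * b with hc
    have hc3 : star u * (b * star b * b) = c * star c * c := by
      have : c * star c * c = star u * (b * star b) * ((u * star u) * b) := by
        rw [hc, star_mul, star_star]; noncomm_ring
      rw [this, hu2, one_mul]; noncomm_ring
    have hstar3 : star (c * star c * c) = star c * c * star c := by
      simp [star_mul, star_star, mul_assoc]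
    set w := P * c + Q * star c with hw
    have e1 : S b * star (S b) * S b = J' (w * star w * w) := by
      rw [hSb, ← hc, ← hw, ← hJ'star, ← hJ'trip]
    rw [e1, hw, hzzz c, hSb, hc3, hstar3]
  -- norm bounds
  set C : ℝ := ‖u‖ * (‖P‖ + ‖Q‖) * 2 with hC
  have hcore : ∀ y : B, ‖P * y + Q * star y‖ ≤ (‖P‖ + ‖Q‖) * ‖y‖ := by
    intro y
    calc ‖P * y + Q * star y‖ ≤ ‖P * y‖ + ‖Q * star y‖ := norm_add_le _ _
      _ ≤ ‖P‖ * ‖y‖ + ‖Q‖ * ‖star y‖ := add_le_add (norm_mul_le _ _) (norm_mul_le _ _)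
      _ = (‖P‖ + ‖Q‖) * ‖y‖ := by rw [norm_star]; ring
  have hTbound : ∀ x : A, ‖T x‖ ≤ C * ‖x‖ := by
    intro x
    calc ‖T x‖ = ‖u * (P * J x + Q * star (J x))‖ := by rw [hzT]
      _ ≤ ‖u‖ * ‖P * J x + Q * star (J x)‖ := norm_mul_le _ _
      _ ≤ ‖u‖ * ((‖P‖ + ‖Q‖) * ‖J x‖) :=
          mul_le_mul_of_nonneg_left (hcore (J x)) (norm_nonneg u)
      _ ≤ ‖u‖ * ((‖P‖ + ‖Q‖) * (2 * ‖x‖)) := by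
          have hb := jordan_norm_le J hJbij hJsq hJstar x
          have hnn : (0:ℝ) ≤ ‖P‖ + ‖Q‖ := by positivity
          have := mul_le_mul_of_nonneg_left hb hnn
          exact mul_le_mul_of_nonneg_left this (norm_nonneg u)
      _ = C * ‖x‖ := by rw [hC]; ring
  have hSbound : ∀ b : B, ‖S b‖ ≤ (2 * ((‖P‖ + ‖Q‖) * ‖star u‖)) * ‖b‖ := by
    intro b
    calc ‖S b‖ = ‖J' (P * (star u * b) + Q * star (star u * b))‖ := by rw [hSb]
      _ ≤ 2 * ‖P * (star u * b) + Q * star (star u * b)‖ :=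
          jordan_norm_le J' hJ'bij hJ'sq hJ'star _
      _ ≤ 2 * ((‖P‖ + ‖Q‖) * ‖star u * b‖) := by
          have := hcore (star u * b)
          linarith [this]
      _ ≤ 2 * ((‖P‖ + ‖Q‖) * (‖star u‖ * ‖b‖)) := by
          have h1 : ‖star u * b‖ ≤ ‖star u‖ * ‖b‖ := norm_mul_le _ _
          have hnn : (0:ℝ) ≤ ‖P‖ + ‖Q‖ := by positivity
          nlinarith [norm_nonneg (star u * b)]
      _ = (2 * ((‖P‖ + ‖Q‖) * ‖star u‖)) * ‖b‖ := by ring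
  have hTle : ∀ x : A, ‖T x‖ ≤ ‖x‖ := fun x =>
    triple_contraction hTbound htripT x
  have hSle : ∀ b : B, ‖S b‖ ≤ ‖b‖ := fun b =>
    triple_contraction hSbound htripS b
  have hTnorm : ∀ x : A, ‖T x‖ = ‖x‖ := by
    intro x
    refine le_antisymm (hTle x) ?_
    calc ‖x‖ = ‖S (T x)‖ := by rw [hST]
      _ ≤ ‖T x‖ := hSle _
  -- additivity
  have hadd : ∀ x y : A, T (x + y) = T x + T y := by
    intro x y
    rw [hT, hT, hT, map_add, star_add]
    noncomm_ring
  -- real homogeneity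
  have hsmul : ∀ (r : ℝ) (x : A), T (r • x) = r • T x := by
    intro r x
    rw [hT, hT, LinearMap.map_smul_of_tower, star_smul, star_trivial]
    rw [mul_smul_comm, mul_smul_comm, mul_smul_comm, mul_smul_comm, smul_add]
  refine ⟨fun b => ⟨S b, hTS b⟩, ?_, hadd, hsmul⟩
  -- isometry
  have hsub : ∀ x y : A, T (x - y) = T x - T y := by
    intro x y
    have := hadd (x - y) y
    rw [sub_add_cancel] at this
    rw [this]
    abel
  apply Isometry.of_dist_eq
  intro x y
  rw [dist_eq_norm, dist_eq_norm, ← hsub, hTnorm]
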